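/- (Deterministic error bound, power scheme.) Let X be an m×n real matrix (m ≥ n) with singular value decomposition X = UΛVᵀ = U₁Λ₁V₁ᵀ + U₂Λ₂V₂ᵀ, where Λ = diag(λ₁,…,λ_n) with λ₁ ≥ ⋯ ≥ λ_n ≥ 0, Λ₁ = diag(λ₁,…,λ_r) with λ_r > 0, Λ₂ = diag(λ_{r+1},…,λ_n), and U₁,V₁ (resp. U₂,V₂) are the corresponding columns of U,V. Fix a target rank r ≤ n−1, an oversampling parameter p ≥ 2, an integer q ≥ 0, and an n×(r+p) real matrix A₁. Set B = (XᵀX)^{2q+1} A₁, assume BᵀB is invertible, and let L = X B (BᵀB)⁻¹ Bᵀ be the power-scheme BRP approximation of X. Assume W := V₁ᵀA₁ satisfies WWᵀ invertible, and write W† = Wᵀ(WWᵀ)⁻¹. Then ‖X − L‖² ≤ ( ‖Λ₂^{2(2q+1)} (V₂ᵀA₁) W† Λ₁^{−(2q+1)}‖² + ‖Λ₂^{2q+1}‖² )^{1/(2q+1)}, where ‖·‖ is the spectral norm. -/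

import Mathlib

open Matrix

noncomputable def specNorm {m n : Type*} [Fintype m] [Fintype n] [DecidableEq n]
    (A : Matrix m n ℝ) : ℝ :=
  ‖LinearMap.toContinuousLinearMap (Matrix.toEuclideanLin A)‖

open scoped Matrix.Norms.L2Operator

lemma specNorm_eq_l2_opNorm {m n : Type*} [Fintype m] [Fintype n] [DecidableEq n]
    (A : Matrix m n ℝ) : specNorm A = ‖A‖ := rfl

noncomputable def en {k : ℕ} (v : Fin k → ℝ) : ℝ :=
  ‖(EuclideanSpace.equiv (Fin k) ℝ).symm v‖

lemma en_nonneg {k : ℕ} (v : Fin k → ℝ) : 0 ≤ en v := norm_nonneg _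

lemma en_sq {k : ℕ} (v : Fin k → ℝ) : en v ^ 2 = v ⬝ᵥ v := by
  rw [en, EuclideanSpace.norm_eq, Real.sq_sqrt (by positivity)]
  simp [dotProduct, pow_two]

lemma en_mulVec_le {k l : ℕ} (A : Matrix (Fin k) (Fin l) ℝ) (v : Fin l → ℝ) :
    en (A *ᵥ v) ≤ ‖A‖ * en v := by
  simpa [en] using Matrix.l2_opNorm_mulVec A ((EuclideanSpace.equiv (Fin l) ℝ).symm v)

lemma norm_transpose' {k l : ℕ} (A : Matrix (Fin k) (Fin l) ℝ) : ‖Aᵀ‖ = ‖A‖ := by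
  rw [← conjTranspose_eq_transpose_of_trivial]; exact Matrix.l2_opNorm_conjTranspose A

lemma dot_shift {k l : ℕ} (A : Matrix (Fin k) (Fin l) ℝ) (u : Fin l → ℝ) (v : Fin k → ℝ) :
    (A *ᵥ u) ⬝ᵥ v = u ⬝ᵥ (Aᵀ *ᵥ v) := by
  rw [Matrix.dotProduct_mulVec, Matrix.vecMul_transpose]

lemma sum_split {n r : ℕ} (hr : r ≤ n) (f : Fin n → ℝ) :
    ∑ i, f i = (∑ i : Fin r, f (Fin.castLE hr i)) +
      ∑ i : Fin (n - r), f ⟨r + i.1, by omega⟩ := by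
  have h : r + (n - r) = n := by omega
  rw [← Fintype.sum_equiv (finCongr h) (fun j => f (finCongr h j)) f (fun x => rfl)]
  rw [Fin.sum_univ_add]
  congr 1

lemma key2 {n r p q : ℕ} (hr : r + 1 ≤ n)
    (V : Matrix (Fin n) (Fin n) ℝ) (lam : Fin n → ℝ)
    (hV : Vᵀ * V = 1)
    (hpos : ∀ i : Fin n, (i : ℕ) < r → 0 < lam i)
    (A₁ : Matrix (Fin n) (Fin (r + p)) ℝ)
    (W : Matrix (Fin r) (Fin (r + p)) ℝ)
    (hW : W = (V.submatrix id (fun i : Fin r => Fin.castLE (Nat.le_of_succ_le hr) i))ᵀ * A₁)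
    (hWinv : IsUnit (W * Wᵀ))
    (F : Matrix (Fin (n - r)) (Fin r) ℝ)
    (hF : F = (Matrix.diagonal fun i : Fin (n - r) =>
            lam ⟨r + i.1, Nat.add_lt_of_lt_sub' i.2⟩) ^ (2 * (2 * q + 1)) *
          ((V.submatrix id (fun i : Fin (n - r) =>
              (⟨r + i.1, Nat.add_lt_of_lt_sub' i.2⟩ : Fin n)))ᵀ * A₁) *
          (Wᵀ * (W * Wᵀ)⁻¹) *
          ((Matrix.diagonal fun i : Fin r => lam (Fin.castLE (Nat.le_of_succ_le hr) i)) ^ (2 * q + 1))⁻¹)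
    (L2 : Matrix (Fin (n - r)) (Fin (n - r)) ℝ)
    (hL2 : L2 = (Matrix.diagonal fun i : Fin (n - r) =>
            lam ⟨r + i.1, by have := i.2; omega⟩) ^ (2 * q + 1))
    (w : Fin n → ℝ)
    (hcon : (A₁ᵀ * (V * (Matrix.diagonal lam) ^ (2 * (2 * q + 1)) * Vᵀ)) *ᵥ w = 0) :
    (fun i => lam i ^ (2 * q + 1) * (Vᵀ *ᵥ w) i) ⬝ᵥ
        (fun i => lam i ^ (2 * q + 1) * (Vᵀ *ᵥ w) i)
      ≤ (‖F‖ ^ 2 + ‖L2‖ ^ 2) * (w ⬝ᵥ w) := by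
  have hrn : r ≤ n := by omega
  set N := 2 * q + 1 with hN
  have hV' : V * Vᵀ = 1 := mul_eq_one_comm.mp hV
  set y : Fin n → ℝ := Vᵀ *ᵥ w with hy
  set emb1 : Fin r → Fin n := Fin.castLE (by omega) with hemb1
  set emb2 : Fin (n - r) → Fin n :=
    (fun i => (⟨r + i.1, by have := i.2; omega⟩ : Fin n)) with hemb2
  set G : Matrix (Fin (n - r)) (Fin (r + p)) ℝ := (V.submatrix id emb2)ᵀ * A₁ with hG
  set u : Fin r → ℝ := fun i => lam (emb1 i) ^ N * y (emb1 i) with hu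
  set y₂ : Fin (n - r) → ℝ := fun i => y (emb2 i) with hy₂
  set s₁ : Fin r → ℝ := fun i => lam (emb1 i) ^ N * u i with hs₁
  set s₂ : Fin (n - r) → ℝ := fun i => lam (emb2 i) ^ (2 * N) * y₂ i with hs₂
  set t₂ : Fin (n - r) → ℝ := fun i => lam (emb2 i) ^ N * y₂ i with ht₂
  have hl : ∀ i : Fin r, lam (emb1 i) ^ N ≠ 0 := by
    intro i
    have : 0 < lam (emb1 i) := hpos (emb1 i) (by simpa [hemb1] using i.2)
    positivity
  -- entries of W and G
  have hMW : ∀ (i : Fin r) (j : Fin (r + p)), W i j = (Vᵀ * A₁) (emb1 i) j := by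
    intro i j
    simp only [hW, Matrix.mul_apply, Matrix.transpose_apply, Matrix.submatrix_apply, id_eq]
  have hMG : ∀ (i : Fin (n - r)) (j : Fin (r + p)), G i j = (Vᵀ * A₁) (emb2 i) j := by
    intro i j
    simp [hG, Matrix.mul_apply, Matrix.transpose_apply, Matrix.submatrix_apply]
  -- the constraint, componentwise
  have hDy : (Matrix.diagonal lam) ^ (2 * N) *ᵥ y = fun i => lam i ^ (2 * N) * y i := by
    funext i
    rw [Matrix.diagonal_pow]
    exact Matrix.mulVec_diagonal _ _ _
  have hcj : ∀ j, (∑ i, (Vᵀ * A₁) i j * (lam i ^ (2 * N) * y i)) = 0 := by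
    intro j
    have h1 : A₁ᵀ * (V * (Matrix.diagonal lam) ^ (2 * N) * Vᵀ)
        = (Vᵀ * A₁)ᵀ * (Matrix.diagonal lam) ^ (2 * N) * Vᵀ := by
      rw [Matrix.transpose_mul, Matrix.transpose_transpose]
      simp only [Matrix.mul_assoc]
    have h0 := congrFun hcon j
    rw [h1, ← Matrix.mulVec_mulVec, ← Matrix.mulVec_mulVec, ← hy, hDy] at h0
    simp only [Matrix.mulVec, dotProduct, Matrix.transpose_apply, Pi.zero_apply] at h0
    exact h0
  -- split the constraint
  have hsplit : ∀ j, (Wᵀ *ᵥ s₁) j + (Gᵀ *ᵥ s₂) j = 0 := by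
    intro j
    have hthis := hcj j
    rw [sum_split hrn (fun i => (Vᵀ * A₁) i j * (lam i ^ (2 * N) * y i))] at hthis
    have e1 : (Wᵀ *ᵥ s₁) j
        = ∑ i : Fin r, (Vᵀ * A₁) (emb1 i) j * (lam (emb1 i) ^ (2 * N) * y (emb1 i)) := by
      simp only [Matrix.mulVec, dotProduct, Matrix.transpose_apply]
      refine Finset.sum_congr rfl fun i _ => ?_
      rw [hMW i j, hs₁]
      simp only [hu]
      rw [two_mul, pow_add]
      ring
    have e2 : (Gᵀ *ᵥ s₂) j
        = ∑ i : Fin (n - r), (Vᵀ * A₁) (emb2 i) j * (lam (emb2 i) ^ (2 * N) * y (emb2 i)) := by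
      simp only [Matrix.mulVec, dotProduct, Matrix.transpose_apply]
      refine Finset.sum_congr rfl fun i _ => ?_
      rw [hMG i j, hs₂]
      try simp only [hy₂]
      try ring
    rw [e1, e2]
    try exact hthis
  have hWvec : Wᵀ *ᵥ s₁ = -(Gᵀ *ᵥ s₂) := by
    funext j
    have h := hsplit j
    simp only [Pi.neg_apply]
    linarith
  have hdet : IsUnit (W * Wᵀ).det := (Matrix.isUnit_iff_isUnit_det _).mp hWinv
  have hs1eq : s₁ = -(((W * Wᵀ)⁻¹ * (W * Gᵀ)) *ᵥ s₂) := by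
    have h1 : (W * Wᵀ) *ᵥ s₁ = -((W * Gᵀ) *ᵥ s₂) := by
      rw [← Matrix.mulVec_mulVec, hWvec, Matrix.mulVec_neg, Matrix.mulVec_mulVec]
    calc s₁ = ((W * Wᵀ)⁻¹ * (W * Wᵀ)) *ᵥ s₁ := by
          rw [Matrix.nonsing_inv_mul _ hdet, Matrix.one_mulVec]
      _ = (W * Wᵀ)⁻¹ *ᵥ ((W * Wᵀ) *ᵥ s₁) := by rw [Matrix.mulVec_mulVec]
      _ = -(((W * Wᵀ)⁻¹ * (W * Gᵀ)) *ᵥ s₂) := by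
          rw [h1, Matrix.mulVec_neg, Matrix.mulVec_mulVec]
  -- the inverse diagonal
  have hDNinv : ((Matrix.diagonal fun i : Fin r => lam (Fin.castLE (by omega : r ≤ n) i)) ^ N)⁻¹
      = Matrix.diagonal (fun i : Fin r => (lam (emb1 i) ^ N)⁻¹) := by
    apply Matrix.inv_eq_right_inv
    rw [Matrix.diagonal_pow, Matrix.diagonal_mul_diagonal, ← Matrix.diagonal_one]
    apply congrArg Matrix.diagonal
    funext i
    simp only [Pi.pow_apply]
    exact mul_inv_cancel₀ (hl i)
  -- transpose of F
  have hWWT : (W * Wᵀ)ᵀ = W * Wᵀ := by rw [Matrix.transpose_mul, Matrix.transpose_transpose]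
  have hFT : Fᵀ = Matrix.diagonal (fun i : Fin r => (lam (emb1 i) ^ N)⁻¹) *
      ((W * Wᵀ)⁻¹ * (W * Gᵀ)) *
      Matrix.diagonal (fun i : Fin (n - r) => lam (emb2 i) ^ (2 * N)) := by
    rw [hF]
    simp only [Matrix.transpose_mul, Matrix.transpose_nonsing_inv, Matrix.transpose_pow,
      Matrix.diagonal_transpose, Matrix.transpose_transpose, hWWT]
    rw [hDNinv]
    have hD2 : (Matrix.diagonal fun i : Fin (n - r) =>
        lam ⟨r + i.1, by have := i.2; omega⟩) ^ (2 * N)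
        = Matrix.diagonal (fun i : Fin (n - r) => lam (emb2 i) ^ (2 * N)) := by
      rw [Matrix.diagonal_pow]
      rfl
    rw [hD2]
    simp only [Matrix.mul_assoc]
  have hDs2 : Matrix.diagonal (fun i : Fin (n - r) => lam (emb2 i) ^ (2 * N)) *ᵥ y₂ = s₂ := by
    funext i
    rw [Matrix.mulVec_diagonal]
  have hFu : Fᵀ *ᵥ y₂ = -u := by
    rw [hFT, ← Matrix.mulVec_mulVec, ← Matrix.mulVec_mulVec, hDs2]
    have hK : ((W * Wᵀ)⁻¹ * (W * Gᵀ)) *ᵥ s₂ = -s₁ := by rw [hs1eq]; simp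
    rw [hK, Matrix.mulVec_neg]
    funext i
    simp only [Pi.neg_apply, Matrix.mulVec_diagonal, hs₁, neg_inj]
    exact inv_mul_cancel_left₀ (hl i) (u i)
  -- norm bounds
  have hFdot : u ⬝ᵥ u ≤ ‖F‖ ^ 2 * (y₂ ⬝ᵥ y₂) := by
    have h1 : u ⬝ᵥ u = (Fᵀ *ᵥ y₂) ⬝ᵥ (Fᵀ *ᵥ y₂) := by rw [hFu]; simp
    rw [h1, ← en_sq]
    calc en (Fᵀ *ᵥ y₂) ^ 2 ≤ (‖Fᵀ‖ * en y₂) ^ 2 :=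
          pow_le_pow_left₀ (en_nonneg _) (en_mulVec_le Fᵀ y₂) 2
      _ = ‖F‖ ^ 2 * en y₂ ^ 2 := by rw [norm_transpose', mul_pow]
      _ = ‖F‖ ^ 2 * (y₂ ⬝ᵥ y₂) := by rw [en_sq]
  have hLdot : t₂ ⬝ᵥ t₂ ≤ ‖L2‖ ^ 2 * (y₂ ⬝ᵥ y₂) := by
    have hLy : L2 *ᵥ y₂ = t₂ := by
      funext i
      rw [hL2, Matrix.diagonal_pow, Matrix.mulVec_diagonal]
      rfl
    rw [← hLy, ← en_sq]
    calc en (L2 *ᵥ y₂) ^ 2 ≤ (‖L2‖ * en y₂) ^ 2 :=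
          pow_le_pow_left₀ (en_nonneg _) (en_mulVec_le L2 y₂) 2
      _ = ‖L2‖ ^ 2 * en y₂ ^ 2 := by rw [mul_pow]
      _ = ‖L2‖ ^ 2 * (y₂ ⬝ᵥ y₂) := by rw [en_sq]
  have hyy : y ⬝ᵥ y = w ⬝ᵥ w := by
    rw [hy, dot_shift, Matrix.transpose_transpose, Matrix.mulVec_mulVec, hV',
      Matrix.one_mulVec]
  have hy2y : y₂ ⬝ᵥ y₂ ≤ w ⬝ᵥ w := by
    rw [← hyy]
    have h2 : y₂ ⬝ᵥ y₂
        = ∑ i : Fin (n - r), (fun i : Fin n => y i * y i) ⟨r + i.1, by omega⟩ := rfl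
    rw [h2]
    have h3 : y ⬝ᵥ y = (∑ i : Fin r, (fun i : Fin n => y i * y i) (Fin.castLE hrn i)) +
        ∑ i : Fin (n - r), (fun i : Fin n => y i * y i) ⟨r + i.1, by omega⟩ :=
      sum_split hrn _
    rw [h3]
    have h4 : 0 ≤ ∑ i : Fin r, (fun i : Fin n => y i * y i) (Fin.castLE hrn i) :=
      Finset.sum_nonneg fun i _ => mul_self_nonneg _
    linarith
  have htt : (fun i => lam i ^ N * y i) ⬝ᵥ (fun i => lam i ^ N * y i)
      = u ⬝ᵥ u + t₂ ⬝ᵥ t₂ := by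
    have h1 : u ⬝ᵥ u = ∑ i : Fin r,
        (fun i : Fin n => (lam i ^ N * y i) * (lam i ^ N * y i)) (Fin.castLE hrn i) := rfl
    have h2 : t₂ ⬝ᵥ t₂ = ∑ i : Fin (n - r),
        (fun i : Fin n => (lam i ^ N * y i) * (lam i ^ N * y i)) ⟨r + i.1, by omega⟩ := rfl
    rw [h1, h2]
    exact sum_split hrn _
  rw [htt]
  calc u ⬝ᵥ u + t₂ ⬝ᵥ t₂ ≤ ‖F‖ ^ 2 * (y₂ ⬝ᵥ y₂) + ‖L2‖ ^ 2 * (y₂ ⬝ᵥ y₂) :=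
        add_le_add hFdot hLdot
    _ = (‖F‖ ^ 2 + ‖L2‖ ^ 2) * (y₂ ⬝ᵥ y₂) := by ring
    _ ≤ (‖F‖ ^ 2 + ‖L2‖ ^ 2) * (w ⬝ᵥ w) := by
        apply mul_le_mul_of_nonneg_left hy2y
        positivity

lemma dot_cs {k : ℕ} (v w : Fin k → ℝ) : (v ⬝ᵥ w) ^ 2 ≤ (v ⬝ᵥ v) * (w ⬝ᵥ w) := by
  simpa [dotProduct, pow_two] using Finset.sum_mul_sq_le_sq_mul_sq Finset.univ v w

lemma dot_nonneg_self {k : ℕ} (v : Fin k → ℝ) : 0 ≤ v ⬝ᵥ v := by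
  rw [← en_sq]; positivity

lemma norm_le_of_en_le {k l : ℕ} {A : Matrix (Fin k) (Fin l) ℝ} {c : ℝ} (hc : 0 ≤ c)
    (h : ∀ v : Fin l → ℝ, en (A *ᵥ v) ≤ c * en v) : ‖A‖ ≤ c := by
  rw [Matrix.l2_opNorm_def]
  refine ContinuousLinearMap.opNorm_le_bound _ hc fun x => ?_
  exact h ((EuclideanSpace.equiv (Fin l) ℝ) x)

lemma seq_pow_bound (a : ℕ → ℝ) (h0 : ∀ j, 0 ≤ a j)
    (hlc : ∀ j, a (j+1) ^ 2 ≤ a j * a (j+2)) :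
    ∀ j, a 1 ^ (j+1) ≤ a 0 ^ j * a (j+1) := by
  have ratio : ∀ j, a 1 * a (j+1) ≤ a 0 * a (j+2) := by
    intro j
    induction j with
    | zero => simpa [pow_two] using hlc 0
    | succ j ih =>
      rcases eq_or_lt_of_le (h0 (j+2)) with hz | hz
      · nlinarith [h0 (j+3), h0 0, h0 1, mul_nonneg (h0 0) (h0 (j+3))]
      · have h1 : (a 1 * a (j+2)) * a (j+2) ≤ (a 0 * a (j+3)) * a (j+2) := by
          nlinarith [hlc (j+1), h0 1, h0 0, h0 (j+3)]
        exact le_of_mul_le_mul_right h1 hz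
  intro j
  induction j with
  | zero => simp
  | succ j ih =>
    have h2 : a 1 ^ (j+2) = a 1 ^ (j+1) * a 1 := by ring
    rw [h2]
    calc a 1 ^ (j+1) * a 1 ≤ (a 0 ^ j * a (j+1)) * a 1 :=
          mul_le_mul_of_nonneg_right ih (h0 1)
      _ = a 0 ^ j * (a 1 * a (j+1)) := by ring
      _ ≤ a 0 ^ j * (a 0 * a (j+2)) :=
          mul_le_mul_of_nonneg_left (ratio j) (pow_nonneg (h0 0) j)
      _ = a 0 ^ (j+1) * a (j+2) := by ring

lemma ak_split {k l : ℕ} (X : Matrix (Fin k) (Fin l) ℝ) (w : Fin l → ℝ) (i j : ℕ) :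
    w ⬝ᵥ ((Xᵀ * X) ^ (i + j) *ᵥ w)
      = ((Xᵀ * X) ^ i *ᵥ w) ⬝ᵥ ((Xᵀ * X) ^ j *ᵥ w) := by
  have hsym : ((Xᵀ * X) ^ i)ᵀ = (Xᵀ * X) ^ i := by
    rw [Matrix.transpose_pow, Matrix.transpose_mul, Matrix.transpose_transpose]
  rw [dot_shift, hsym, Matrix.mulVec_mulVec, ← pow_add, dotProduct_comm]

lemma ak_split' {k l : ℕ} (X : Matrix (Fin k) (Fin l) ℝ) (w : Fin l → ℝ) (i j : ℕ) :
    w ⬝ᵥ ((Xᵀ * X) ^ (i + j + 1) *ᵥ w)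
      = (X *ᵥ ((Xᵀ * X) ^ i *ᵥ w)) ⬝ᵥ (X *ᵥ ((Xᵀ * X) ^ j *ᵥ w)) := by
  rw [dot_shift, Matrix.mulVec_mulVec, Matrix.mulVec_mulVec]
  have h2 : Xᵀ * X * (Xᵀ * X) ^ j = (Xᵀ * X) ^ (j + 1) := (pow_succ' _ _).symm
  rw [h2, ← ak_split X w i (j+1), show i + (j+1) = i + j + 1 by omega]

lemma mconj_pow {n : ℕ} (V D : Matrix (Fin n) (Fin n) ℝ) (hV : Vᵀ * V = 1)
    (hV' : V * Vᵀ = 1) (k : ℕ) : (V * D * Vᵀ) ^ k = V * D ^ k * Vᵀ := by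
  induction k with
  | zero => simp [hV']
  | succ k ih =>
    rw [pow_succ, ih, pow_succ]
    calc V * D ^ k * Vᵀ * (V * D * Vᵀ) = V * D ^ k * (Vᵀ * V) * D * Vᵀ := by
          simp only [Matrix.mul_assoc]
      _ = V * (D ^ k * D) * Vᵀ := by rw [hV]; simp only [Matrix.mul_one, Matrix.mul_assoc]

lemma master {m n r p : ℕ} (q : ℕ)
    (hmn : n ≤ m) (hr : r + 1 ≤ n) (hp : 2 ≤ p)
    (X : Matrix (Fin m) (Fin n) ℝ)
    (U : Matrix (Fin m) (Fin n) ℝ) (V : Matrix (Fin n) (Fin n) ℝ)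
    (lam : Fin n → ℝ)
    (hU : Uᵀ * U = 1) (hV : Vᵀ * V = 1)
    (hnn : ∀ i : Fin n, 0 ≤ lam i)
    (hpos : ∀ i : Fin n, (i : ℕ) < r → 0 < lam i)
    (hX : X = U * Matrix.diagonal lam * Vᵀ)
    (A₁ : Matrix (Fin n) (Fin (r + p)) ℝ)
    (B : Matrix (Fin n) (Fin (r + p)) ℝ) (hB : B = (Xᵀ * X) ^ (2 * q + 1) * A₁)
    (hBinv : IsUnit (Bᵀ * B))
    (L : Matrix (Fin m) (Fin n) ℝ) (hL : L = X * B * (Bᵀ * B)⁻¹ * Bᵀ)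
    (W : Matrix (Fin r) (Fin (r + p)) ℝ)
    (hW : W = (V.submatrix id (fun i : Fin r => Fin.castLE (Nat.le_of_succ_le hr) i))ᵀ * A₁)
    (hWinv : IsUnit (W * Wᵀ))
    (F : Matrix (Fin (n - r)) (Fin r) ℝ)
    (hF : F = (Matrix.diagonal fun i : Fin (n - r) =>
            lam ⟨r + i.1, Nat.add_lt_of_lt_sub' i.2⟩) ^ (2 * (2 * q + 1)) *
          ((V.submatrix id (fun i : Fin (n - r) =>
              (⟨r + i.1, Nat.add_lt_of_lt_sub' i.2⟩ : Fin n)))ᵀ * A₁) *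
          (Wᵀ * (W * Wᵀ)⁻¹) *
          ((Matrix.diagonal fun i : Fin r => lam (Fin.castLE (Nat.le_of_succ_le hr) i)) ^ (2 * q + 1))⁻¹)
    (L2 : Matrix (Fin (n - r)) (Fin (n - r)) ℝ)
    (hL2 : L2 = (Matrix.diagonal fun i : Fin (n - r) =>
            lam ⟨r + i.1, Nat.add_lt_of_lt_sub' i.2⟩) ^ (2 * q + 1)) :
    ‖X - L‖ ^ 2 ≤ (‖F‖ ^ 2 + ‖L2‖ ^ 2) ^ ((1 : ℝ) / (2 * (q : ℝ) + 1)) := by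
  have hrn : r ≤ n := by omega
  set N := 2 * q + 1 with hN
  have hV' : V * Vᵀ = 1 := mul_eq_one_comm.mp hV
  have hXtX : Xᵀ * X = V * (Matrix.diagonal lam * Matrix.diagonal lam) * Vᵀ := by
    subst hX
    simp only [Matrix.transpose_mul, Matrix.transpose_transpose, Matrix.diagonal_transpose,
      Matrix.mul_assoc]
    rw [← Matrix.mul_assoc Uᵀ U, hU, Matrix.one_mul]
  have hpowk : ∀ k : ℕ, (Xᵀ * X) ^ k = V * (Matrix.diagonal lam) ^ (2 * k) * Vᵀ := by
    intro k
    rw [hXtX, mconj_pow _ _ hV hV', ← pow_two, ← pow_mul]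
  have hdetB : IsUnit (Bᵀ * B).det := (Matrix.isUnit_iff_isUnit_det _).mp hBinv
  set P := B * ((Bᵀ * B)⁻¹ * Bᵀ) with hP
  have hXL : X - L = X * (1 - P) := by
    rw [hL, hP, Matrix.mul_sub, Matrix.mul_one]
    simp only [Matrix.mul_assoc]
  have hQBt : Bᵀ * (1 - P) = 0 := by
    rw [Matrix.mul_sub, Matrix.mul_one, hP, ← Matrix.mul_assoc Bᵀ B,
      Matrix.mul_nonsing_inv_cancel_left _ _ hdetB, sub_self]
  have hPT : (1 - P)ᵀ = 1 - P := by
    rw [Matrix.transpose_sub, Matrix.transpose_one, hP]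
    simp only [Matrix.transpose_mul, Matrix.transpose_transpose, Matrix.transpose_nonsing_inv]
    simp only [Matrix.mul_assoc]
  have hPP : P * P = P := by
    rw [hP]
    calc B * ((Bᵀ * B)⁻¹ * Bᵀ) * (B * ((Bᵀ * B)⁻¹ * Bᵀ))
        = B * ((Bᵀ * B)⁻¹ * ((Bᵀ * B) * ((Bᵀ * B)⁻¹ * Bᵀ))) := by
          simp only [Matrix.mul_assoc]
      _ = B * ((Bᵀ * B)⁻¹ * Bᵀ) := by
          rw [Matrix.nonsing_inv_mul_cancel_left _ _ hdetB]
  have hQQ : (1 - P) * (1 - P) = 1 - P := by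
    have h1 : (1 - P) * (1 - P) = 1 - P - P + P * P := by noncomm_ring
    rw [h1, hPP]; abel
  have hQcon : ∀ z : Fin n → ℝ, en ((1 - P) *ᵥ z) ≤ en z := by
    intro z
    set w := (1 - P) *ᵥ z with hw
    have h1 : w ⬝ᵥ w = z ⬝ᵥ w := by
      calc w ⬝ᵥ w = ((1 - P) *ᵥ z) ⬝ᵥ w := rfl
        _ = z ⬝ᵥ ((1 - P)ᵀ *ᵥ w) := dot_shift _ _ _
        _ = z ⬝ᵥ ((1 - P) *ᵥ ((1 - P) *ᵥ z)) := by rw [hPT, hw]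
        _ = z ⬝ᵥ w := by rw [Matrix.mulVec_mulVec, hQQ, hw]
    have e1 : en w ^ 2 * en w ^ 2 ≤ en z ^ 2 * en w ^ 2 := by
      have h2 := dot_cs z w
      rw [← en_sq z, ← en_sq w] at h2
      calc en w ^ 2 * en w ^ 2 = (w ⬝ᵥ w) * (w ⬝ᵥ w) := by rw [en_sq]
        _ = (z ⬝ᵥ w) ^ 2 := by rw [← h1]; ring
        _ ≤ en z ^ 2 * en w ^ 2 := h2
    rcases eq_or_lt_of_le (en_nonneg w) with h0 | h0
    · rw [← h0]; exact en_nonneg z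
    · have h2 : en w ^ 2 ≤ en z ^ 2 := le_of_mul_le_mul_right e1 (by positivity)
      nlinarith [en_nonneg w, en_nonneg z]
  set R := ‖F‖ ^ 2 + ‖L2‖ ^ 2 with hRdef
  have hR0 : (0:ℝ) ≤ R := by positivity
  have hmain : ∀ z : Fin n → ℝ,
      en ((X * (1 - P)) *ᵥ z) ≤ R ^ ((1:ℝ) / (2 * (N:ℝ))) * en z := by
    intro z
    set w := (1 - P) *ᵥ z with hw
    set a : ℕ → ℝ := fun k => w ⬝ᵥ ((Xᵀ * X) ^ k *ᵥ w) with ha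
    have ha0 : ∀ j, 0 ≤ a j := by
      intro j
      rcases Nat.even_or_odd j with ⟨i, hi⟩ | ⟨i, hi⟩
      · have e : a j = ((Xᵀ * X) ^ i *ᵥ w) ⬝ᵥ ((Xᵀ * X) ^ i *ᵥ w) := by
          simp only [ha]; rw [hi]; exact ak_split X w i i
        rw [e]; exact dot_nonneg_self _
      · have e : a j = (X *ᵥ ((Xᵀ * X) ^ i *ᵥ w)) ⬝ᵥ (X *ᵥ ((Xᵀ * X) ^ i *ᵥ w)) := by
          simp only [ha]; rw [show j = i + i + 1 by omega]; exact ak_split' X w i i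
        rw [e]; exact dot_nonneg_self _
    have hlc : ∀ j, a (j+1) ^ 2 ≤ a j * a (j+2) := by
      intro j
      rcases Nat.even_or_odd j with ⟨i, hi⟩ | ⟨i, hi⟩
      · have e1 : a (j+1) = ((Xᵀ * X) ^ i *ᵥ w) ⬝ᵥ ((Xᵀ * X) ^ (i+1) *ᵥ w) := by
          simp only [ha]; rw [show j + 1 = i + (i+1) by omega]; exact ak_split X w i (i+1)
        have e2 : a j = ((Xᵀ * X) ^ i *ᵥ w) ⬝ᵥ ((Xᵀ * X) ^ i *ᵥ w) := by
          simp only [ha]; rw [hi]; exact ak_split X w i i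
        have e3 : a (j+2) = ((Xᵀ * X) ^ (i+1) *ᵥ w) ⬝ᵥ ((Xᵀ * X) ^ (i+1) *ᵥ w) := by
          simp only [ha]; rw [show j + 2 = (i+1) + (i+1) by omega]; exact ak_split X w (i+1) (i+1)
        rw [e1, e2, e3]; exact dot_cs _ _
      · have e1 : a (j+1) = (X *ᵥ ((Xᵀ * X) ^ i *ᵥ w)) ⬝ᵥ (X *ᵥ ((Xᵀ * X) ^ (i+1) *ᵥ w)) := by
          simp only [ha]; rw [show j + 1 = i + (i+1) + 1 by omega]; exact ak_split' X w i (i+1)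
        have e2 : a j = (X *ᵥ ((Xᵀ * X) ^ i *ᵥ w)) ⬝ᵥ (X *ᵥ ((Xᵀ * X) ^ i *ᵥ w)) := by
          simp only [ha]; rw [show j = i + i + 1 by omega]; exact ak_split' X w i i
        have e3 : a (j+2) = (X *ᵥ ((Xᵀ * X) ^ (i+1) *ᵥ w)) ⬝ᵥ (X *ᵥ ((Xᵀ * X) ^ (i+1) *ᵥ w)) := by
          simp only [ha]; rw [show j + 2 = (i+1) + (i+1) + 1 by omega]
          exact ak_split' X w (i+1) (i+1)
        rw [e1, e2, e3]; exact dot_cs _ _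
    have hseq := seq_pow_bound a ha0 hlc (2 * q)
    have ha1 : a 1 = en (X *ᵥ w) ^ 2 := by
      rw [en_sq]
      simp only [ha]
      rw [show (1:ℕ) = 0 + 0 + 1 by omega, ak_split' X w 0 0, pow_zero, Matrix.one_mulVec]
    have ha0w : a 0 = en w ^ 2 := by
      simp only [ha, pow_zero, Matrix.one_mulVec]; rw [en_sq]
    have hconB : (A₁ᵀ * (V * (Matrix.diagonal lam) ^ (2 * N) * Vᵀ)) *ᵥ w = 0 := by
      have h1 : Bᵀ *ᵥ w = 0 := by
        rw [hw, Matrix.mulVec_mulVec, hQBt, Matrix.zero_mulVec]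
      have h2 : A₁ᵀ * (V * (Matrix.diagonal lam) ^ (2 * N) * Vᵀ) = Bᵀ := by
        rw [← hpowk N, hB, Matrix.transpose_mul]
        congr 1
        rw [Matrix.transpose_pow, Matrix.transpose_mul, Matrix.transpose_transpose]
      rw [h2, h1]
    have haN : a N ≤ R * a 0 := by
      have haNt : a N = (fun i => lam i ^ N * (Vᵀ *ᵥ w) i) ⬝ᵥ
          (fun i => lam i ^ N * (Vᵀ *ᵥ w) i) := by
        simp only [ha]
        rw [hpowk N, ← Matrix.mulVec_mulVec, ← Matrix.mulVec_mulVec]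
        rw [dotProduct_comm, dot_shift]
        have hD : (Matrix.diagonal lam) ^ (2 * N) *ᵥ (Vᵀ *ᵥ w)
            = fun i => lam i ^ (2 * N) * (Vᵀ *ᵥ w) i := by
          funext i
          rw [Matrix.diagonal_pow]
          exact Matrix.mulVec_diagonal _ _ _
        rw [hD]
        simp only [dotProduct]
        refine Finset.sum_congr rfl fun i _ => ?_
        rw [two_mul, pow_add]
        ring
      have ha00 : a 0 = w ⬝ᵥ w := by simp only [ha, pow_zero, Matrix.one_mulVec]
      rw [haNt, ha00, hRdef]
      exact key2 hr V lam hV hpos A₁ W hW hWinv F hF L2 hL2 w hconB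
    have hfin : en (X *ᵥ w) ^ (2 * N) ≤ R * en w ^ (2 * N) := by
      calc en (X *ᵥ w) ^ (2 * N) = (en (X *ᵥ w) ^ 2) ^ N := by rw [← pow_mul]
        _ = a 1 ^ N := by rw [ha1]
        _ ≤ a 0 ^ (2 * q) * a N := hseq
        _ ≤ a 0 ^ (2 * q) * (R * a 0) :=
            mul_le_mul_of_nonneg_left haN (pow_nonneg (ha0 0) _)
        _ = R * a 0 ^ N := by rw [hN, pow_succ]; ring
        _ = R * (en w ^ 2) ^ N := by rw [ha0w]
        _ = R * en w ^ (2 * N) := by rw [← pow_mul]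
    have hXwb : en (X *ᵥ w) ≤ R ^ ((1:ℝ) / (2 * (N:ℝ))) * en w := by
      have hx := en_nonneg (X *ᵥ w)
      have hy := en_nonneg w
      have h2N : (0:ℝ) < 2 * (N:ℝ) := by positivity
      have h1 : (en (X *ᵥ w) ^ (2 * N) : ℝ) ^ ((1:ℝ) / (2 * (N:ℝ)))
          ≤ (R * en w ^ (2 * N)) ^ ((1:ℝ) / (2 * (N:ℝ))) :=
        Real.rpow_le_rpow (by positivity) hfin (by positivity)
      have cast1 : ((2 * N : ℕ) : ℝ) = 2 * (N:ℝ) := by push_cast; ring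
      have hxpow : (en (X *ᵥ w) ^ (2 * N) : ℝ) ^ ((1:ℝ) / (2 * (N:ℝ))) = en (X *ᵥ w) := by
        rw [← Real.rpow_natCast (en (X *ᵥ w)) (2 * N), ← Real.rpow_mul hx, cast1,
          mul_one_div, div_self (ne_of_gt h2N), Real.rpow_one]
      have hypow : (en w ^ (2 * N) : ℝ) ^ ((1:ℝ) / (2 * (N:ℝ))) = en w := by
        rw [← Real.rpow_natCast (en w) (2 * N), ← Real.rpow_mul hy, cast1,
          mul_one_div, div_self (ne_of_gt h2N), Real.rpow_one]
      rw [hxpow, Real.mul_rpow hR0 (by positivity), hypow] at h1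
      exact h1
    have hXPz : (X * (1 - P)) *ᵥ z = X *ᵥ w := by rw [hw, Matrix.mulVec_mulVec]
    rw [hXPz]
    calc en (X *ᵥ w) ≤ R ^ ((1:ℝ) / (2 * (N:ℝ))) * en w := hXwb
      _ ≤ R ^ ((1:ℝ) / (2 * (N:ℝ))) * en z :=
          mul_le_mul_of_nonneg_left (hQcon z) (Real.rpow_nonneg hR0 _)
  have hnorm : ‖X * (1 - P)‖ ≤ R ^ ((1:ℝ) / (2 * (N:ℝ))) :=
    norm_le_of_en_le (Real.rpow_nonneg hR0 _) hmain
  rw [hXL]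
  calc ‖X * (1 - P)‖ ^ 2 ≤ (R ^ ((1:ℝ) / (2 * (N:ℝ)))) ^ 2 :=
        pow_le_pow_left₀ (norm_nonneg _) hnorm 2
    _ = R ^ ((1:ℝ) / (2 * (q:ℝ) + 1)) := by
        rw [← Real.rpow_natCast (R ^ ((1:ℝ) / (2 * (N:ℝ)))) 2, ← Real.rpow_mul hR0]
        congr 1
        have hNr : (N:ℝ) = 2 * (q:ℝ) + 1 := by rw [hN]; push_cast; ring
        rw [hNr]
        have : (2 * (q:ℝ) + 1) ≠ 0 := by positivity
        field_simp
        norm_num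

/-- deterministic spectral-norm error bound for the power-scheme
BRP low-rank approximation. -/
theorem brp_power_scheme_deterministic_error_bound {m n r p : ℕ} (q : ℕ)
    (hmn : n ≤ m) (hr : r + 1 ≤ n) (hp : 2 ≤ p)
    (X : Matrix (Fin m) (Fin n) ℝ)
    (U : Matrix (Fin m) (Fin n) ℝ) (V : Matrix (Fin n) (Fin n) ℝ)
    (lam : Fin n → ℝ)
    (hU : Uᵀ * U = 1) (hV : Vᵀ * V = 1)
    (hsort : ∀ i j : Fin n, i ≤ j → lam j ≤ lam i)
    (hnn : ∀ i : Fin n, 0 ≤ lam i)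
    (hpos : ∀ i : Fin n, (i : ℕ) < r → 0 < lam i)
    (hX : X = U * Matrix.diagonal lam * Vᵀ)
    (A₁ : Matrix (Fin n) (Fin (r + p)) ℝ)
    (B : Matrix (Fin n) (Fin (r + p)) ℝ) (hB : B = (Xᵀ * X) ^ (2 * q + 1) * A₁)
    (hBinv : IsUnit (Bᵀ * B))
    (L : Matrix (Fin m) (Fin n) ℝ) (hL : L = X * B * (Bᵀ * B)⁻¹ * Bᵀ)
    (W : Matrix (Fin r) (Fin (r + p)) ℝ)
    (hW : W = (V.submatrix id (fun i : Fin r => Fin.castLE (by omega) i))ᵀ * A₁)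
    (hWinv : IsUnit (W * Wᵀ)) :
    specNorm (X - L) ^ 2 ≤
      (specNorm
          ((Matrix.diagonal fun i : Fin (n - r) =>
              lam ⟨r + i.1, by have := i.2; omega⟩) ^ (2 * (2 * q + 1)) *
            ((V.submatrix id (fun i : Fin (n - r) =>
                (⟨r + i.1, by have := i.2; omega⟩ : Fin n)))ᵀ * A₁) *
            (Wᵀ * (W * Wᵀ)⁻¹) *
            ((Matrix.diagonal fun i : Fin r =>
                lam (Fin.castLE (by omega) i)) ^ (2 * q + 1))⁻¹) ^ 2 +
        specNorm ((Matrix.diagonal fun i : Fin (n - r) =>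
          lam ⟨r + i.1, by have := i.2; omega⟩) ^ (2 * q + 1)) ^ 2) ^
        ((1 : ℝ) / (2 * (q : ℝ) + 1)) := by
  simp only [specNorm_eq_l2_opNorm]
  exact master q hmn hr hp X U V lam hU hV hnn hpos hX A₁ B hB hBinv L hL W hW hWinv _ rfl _ rfl
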